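/- (Kantorovich-type local convergence, existence part) Let D ⊆ ℝⁿ be open, F : D → ℝ^m (m ≤ n) differentiable with J_F of full rank m on an open convex set Ω ⊆ D. Assume: (i) there exist γ ≥ 0 and p ∈ (0,1] with ‖J_F(y) − J_F(x)‖₂ ≤ γ‖y − x‖₂^p for all x, y ∈ Ω; (ii) there exists μ > 0 with ‖J_F(x)†‖₂ ≤ μ for all x ∈ Ω. Then there exists β > 0 with τ := γμ^{1+p}β^p/(1+p) < 1 and μβ/(1 − τ) < η such that: if x₀ ∈ Ω_η := {x ∈ Ω : ∀y, ‖y − x‖₂ < η ⇒ y ∈ Ω} and ‖F(x₀)‖₂ < β, then the Normal Flow iterates x_{k+1} = x_k − J_F(x_k)†F(x_k) are well defined and converge to some x* ∈ Ω with F(x*) = 0. -/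

import Mathlib

open Matrix

noncomputable def kthLargest {m : Type*} [Fintype m] (f : m → ℝ) (j : ℕ) : ℝ :=
  let c := Fintype.card m
  let g : Fin c → ℝ := f ∘ (Fintype.equivFin m).symm
  if h : c - j < c then (g ∘ Tuple.sort g) ⟨c - j, h⟩ else 0

noncomputable def singularValue {m n : Type*} [Fintype m] [Fintype n] [DecidableEq n]
    (A : Matrix m n ℝ) (j : ℕ) : ℝ :=
  Real.sqrt (kthLargest (show (Aᵀ * A).IsHermitian by
    simpa using Matrix.isHermitian_conjTranspose_mul_self A).eigenvalues j)

noncomputable def specNorm {m n : Type*} [Fintype m] [Fintype n] [DecidableEq n]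
    (A : Matrix m n ℝ) : ℝ := singularValue A 1

noncomputable def vec2 {n : Type*} [Fintype n] (v : n → ℝ) : ℝ :=
  Real.sqrt (∑ i, v i ^ 2)

/-- Moore–Penrose pseudoinverse of a full row-rank matrix. -/
noncomputable def pinvRow {m n : ℕ} (A : Matrix (Fin m) (Fin n) ℝ) :
    Matrix (Fin n) (Fin m) ℝ := Aᵀ * (A * Aᵀ)⁻¹

lemma le_kthLargest_one {m : Type*} [Fintype m] (f : m → ℝ) (i : m) :
    f i ≤ kthLargest f 1 := by
  have hc : 0 < Fintype.card m := Fintype.card_pos_iff.2 ⟨i⟩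
  unfold kthLargest
  rw [dif_pos (Nat.sub_lt hc one_pos)]
  set c := Fintype.card m with hcdef
  set g : Fin c → ℝ := f ∘ (Fintype.equivFin m).symm with hg
  have h1 : f i = g ((Tuple.sort g) ((Tuple.sort g).symm (Fintype.equivFin m i))) := by
    simp [hg]
  rw [h1]
  exact Tuple.monotone_sort g (by
    rw [Fin.le_def]; exact Nat.le_sub_one_of_lt (Fin.is_lt _))

lemma rayleigh {k : Type*} [Fintype k] [DecidableEq k] {M : Matrix k k ℝ}
    (hM : M.IsHermitian) {lam : ℝ} (hlam : ∀ i, hM.eigenvalues i ≤ lam)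
    (x : k → ℝ) : x ⬝ᵥ (M *ᵥ x) ≤ lam * (x ⬝ᵥ x) := by
  classical
  set U : Matrix k k ℝ := (hM.eigenvectorUnitary : Matrix k k ℝ) with hU
  have hstar : star U = Uᵀ :=
    (U.star_eq_conjTranspose).trans (conjTranspose_eq_transpose_of_trivial U)
  have hUU : U * Uᵀ = 1 := by
    rw [← hstar]; exact Matrix.mem_unitaryGroup_iff.mp hM.eigenvectorUnitary.2
  set y : k → ℝ := Uᵀ *ᵥ x with hy
  have hyy : y ⬝ᵥ y = x ⬝ᵥ x := by
    rw [hy, dotProduct_mulVec, vecMul_transpose, mulVec_mulVec, hUU, one_mulVec]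
  have hmain : x ⬝ᵥ (M *ᵥ x) = ∑ i, hM.eigenvalues i * y i ^ 2 := by
    conv_lhs => rw [hM.spectral_theorem, Unitary.conjStarAlgAut_apply]
    rw [← hU, hstar, ← mulVec_mulVec, ← mulVec_mulVec, dotProduct_mulVec, ← mulVec_transpose, ← hy]
    simp only [dotProduct, mulVec_diagonal, Function.comp_apply, RCLike.ofReal_real_eq_id, id_eq]
    exact Finset.sum_congr rfl fun i _ => by ring
  rw [hmain, ← hyy]
  have h2 : lam * (y ⬝ᵥ y) = ∑ i, lam * y i ^ 2 := by
    simp only [dotProduct, Finset.mul_sum]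
    exact Finset.sum_congr rfl fun i _ => by ring
  rw [h2]
  exact Finset.sum_le_sum fun i _ => mul_le_mul_of_nonneg_right (hlam i) (sq_nonneg _)

lemma specNorm_nonneg {m n : Type*} [Fintype m] [Fintype n] [DecidableEq n]
    (A : Matrix m n ℝ) : 0 ≤ specNorm A := Real.sqrt_nonneg _

lemma sqrt_dot_mulVec_le {m n : Type*} [Fintype m] [Fintype n] [DecidableEq n]
    (A : Matrix m n ℝ) (x : n → ℝ) :
    Real.sqrt ((A *ᵥ x) ⬝ᵥ (A *ᵥ x)) ≤ specNorm A * Real.sqrt (x ⬝ᵥ x) := by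
  rcases isEmpty_or_nonempty n with hn | hn
  · have hx : A *ᵥ x = 0 := by
      ext i; simp [mulVec, dotProduct]
    rw [hx]
    simp only [zero_dotProduct, Real.sqrt_zero]
    exact mul_nonneg (specNorm_nonneg A) (Real.sqrt_nonneg _)
  · set hH := (show (Aᵀ * A).IsHermitian by
      simpa using Matrix.isHermitian_conjTranspose_mul_self A)
    set lam := kthLargest hH.eigenvalues 1 with hlamdef
    have hlam : ∀ i, hH.eigenvalues i ≤ lam := fun i => le_kthLargest_one _ i
    have hlam0 : 0 ≤ lam := by
      obtain ⟨i⟩ := hn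
      have hps : (Aᵀ * A).PosSemidef := by
        simpa [conjTranspose_eq_transpose_of_trivial] using
          Matrix.posSemidef_conjTranspose_mul_self A
      exact le_trans (hps.eigenvalues_nonneg i) (hlam i)
    have h1 : (A *ᵥ x) ⬝ᵥ (A *ᵥ x) = x ⬝ᵥ ((Aᵀ * A) *ᵥ x) := by
      rw [dotProduct_mulVec, ← mulVec_transpose, mulVec_mulVec, dotProduct_comm,
        dotProduct_mulVec, ← mulVec_transpose, transpose_mul, transpose_transpose]
    have h2 := rayleigh hH hlam x
    have h3 : Real.sqrt ((A *ᵥ x) ⬝ᵥ (A *ᵥ x)) ≤ Real.sqrt (lam * (x ⬝ᵥ x)) := by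
      apply Real.sqrt_le_sqrt; rw [h1]; exact h2
    calc Real.sqrt ((A *ᵥ x) ⬝ᵥ (A *ᵥ x)) ≤ Real.sqrt (lam * (x ⬝ᵥ x)) := h3
      _ = Real.sqrt lam * Real.sqrt (x ⬝ᵥ x) := Real.sqrt_mul hlam0 _
      _ = specNorm A * Real.sqrt (x ⬝ᵥ x) := rfl

lemma norm_euclid {k : Type*} [Fintype k] (v : k → ℝ) :
    ‖(WithLp.equiv 2 (k → ℝ)).symm v‖ = Real.sqrt (v ⬝ᵥ v) := by
  rw [EuclideanSpace.norm_eq]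
  congr 1
  simp [dotProduct, Real.norm_eq_abs, sq_abs, sq]

lemma norm_euclid' {k : Type*} [Fintype k] (v : EuclideanSpace ℝ k) :
    ‖v‖ = Real.sqrt ((WithLp.equiv 2 (k → ℝ) v) ⬝ᵥ (WithLp.equiv 2 (k → ℝ) v)) := by
  rw [← norm_euclid]; rfl

lemma norm_mulVec_le {m n : Type*} [Fintype m] [Fintype n] [DecidableEq n]
    (A : Matrix m n ℝ) (v : EuclideanSpace ℝ n) :
    ‖(WithLp.equiv 2 (m → ℝ)).symm (A *ᵥ (WithLp.equiv 2 (n → ℝ) v))‖ ≤ specNorm A * ‖v‖ := by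
  rw [norm_euclid, norm_euclid']
  exact sqrt_dot_mulVec_le A _

lemma opNorm_toEuclideanCLM_le {m n : Type*} [Fintype m] [Fintype n] [DecidableEq m] [DecidableEq n]
    (A : Matrix m n ℝ) :
    ‖LinearMap.toContinuousLinearMap (Matrix.toEuclideanLin A)‖ ≤ specNorm A := by
  apply ContinuousLinearMap.opNorm_le_bound _ (specNorm_nonneg A)
  intro x
  have : (LinearMap.toContinuousLinearMap (Matrix.toEuclideanLin A)) x
      = (WithLp.equiv 2 (m → ℝ)).symm (A *ᵥ (WithLp.equiv 2 (n → ℝ) x)) := by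
    simp [Matrix.toEuclideanLin_apply]
  rw [this]
  exact norm_mulVec_le A x

lemma mul_pinv_eq_one {m n : ℕ} (A : Matrix (Fin m) (Fin n) ℝ) (h : A.rank = m) :
    A * pinvRow A = 1 := by
  have h1 : (A * Aᵀ).rank = m := by rw [rank_self_mul_transpose, h]
  have h2 : IsUnit (A * Aᵀ) := by
    have hr : LinearMap.range (A * Aᵀ).mulVecLin = ⊤ := by
      apply Submodule.eq_top_of_finrank_eq
      rw [← Matrix.rank, h1]
      simp
    have hbij : Function.Bijective (A * Aᵀ).mulVecLin := by
      refine ⟨?_, LinearMap.range_eq_top.mp hr⟩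
      exact (LinearMap.injective_iff_surjective).mpr (LinearMap.range_eq_top.mp hr)
    have : IsUnit ((Matrix.toLinAlgEquiv' (A * Aᵀ)) : Module.End ℝ (Fin m → ℝ)) :=
      (Module.End.isUnit_iff _).mpr hbij
    simpa using (Matrix.toLinAlgEquiv'.symm : _ ≃ₐ[ℝ] _).toRingHom.isUnit_map this
  rw [pinvRow, ← Matrix.mul_assoc]
  exact mul_nonsing_inv _ ((isUnit_iff_isUnit_det _).mp h2)

lemma taylor_bound {n m : ℕ} (Ω : Set (EuclideanSpace ℝ (Fin n))) (hΩconv : Convex ℝ Ω)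
    (F : EuclideanSpace ℝ (Fin n) → EuclideanSpace ℝ (Fin m))
    (J : EuclideanSpace ℝ (Fin n) → Matrix (Fin m) (Fin n) ℝ)
    (hdiff : ∀ x ∈ Ω, HasFDerivAt F
      (LinearMap.toContinuousLinearMap (Matrix.toEuclideanLin (J x))) x)
    (γ p : ℝ) (hγ : 0 ≤ γ) (hp1 : 0 < p)
    (hHolder : ∀ x ∈ Ω, ∀ y ∈ Ω, specNorm (J y - J x) ≤ γ * ‖y - x‖ ^ p)
    (x : EuclideanSpace ℝ (Fin n)) (hx : x ∈ Ω) (y : EuclideanSpace ℝ (Fin n)) (hy : y ∈ Ω) :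
    ‖F y - F x - (LinearMap.toContinuousLinearMap (Matrix.toEuclideanLin (J x))) (y - x)‖
      ≤ (γ * ‖y - x‖ ^ p) * ‖y - x‖ := by
  set s := segment ℝ x y with hs
  have hsΩ : s ⊆ Ω := hΩconv.segment_subset hx hy
  have hf : ∀ z ∈ s, HasFDerivWithinAt F
      (LinearMap.toContinuousLinearMap (Matrix.toEuclideanLin (J z))) s z :=
    fun z hz => (hdiff z (hsΩ hz)).hasFDerivWithinAt
  have bound : ∀ z ∈ s, ‖LinearMap.toContinuousLinearMap (Matrix.toEuclideanLin (J z))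
      - LinearMap.toContinuousLinearMap (Matrix.toEuclideanLin (J x))‖ ≤ γ * ‖y - x‖ ^ p := by
    intro z hz
    have heq : LinearMap.toContinuousLinearMap (Matrix.toEuclideanLin (J z))
        - LinearMap.toContinuousLinearMap (Matrix.toEuclideanLin (J x))
        = LinearMap.toContinuousLinearMap (Matrix.toEuclideanLin (J z - J x)) := by
      simp [map_sub]
    rw [heq]
    refine le_trans (opNorm_toEuclideanCLM_le _) (le_trans (hHolder x hx z (hsΩ hz)) ?_)
    have hzx : ‖z - x‖ ≤ ‖y - x‖ := by
      have := dist_add_dist_of_mem_segment hz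
      have h2 : dist x z ≤ dist x y := by linarith [dist_nonneg (x := z) (y := y)]
      rw [dist_comm x z, dist_comm x y] at h2
      simpa [dist_eq_norm] using h2
    gcongr
  exact (convex_segment x y).norm_image_sub_le_of_norm_hasFDerivWithin_le' hf bound
    (left_mem_segment ℝ x y) (right_mem_segment ℝ x y)

/-- Kantorovich-type local convergence of the Normal Flow iteration. -/
theorem kantorovich_normal_flow {n m : ℕ} (hmn : m ≤ n)
    (D Ω : Set (EuclideanSpace ℝ (Fin n)))
    (hD : IsOpen D) (hΩ : IsOpen Ω) (hΩD : Ω ⊆ D) (hΩconv : Convex ℝ Ω)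
    (F : EuclideanSpace ℝ (Fin n) → EuclideanSpace ℝ (Fin m))
    (J : EuclideanSpace ℝ (Fin n) → Matrix (Fin m) (Fin n) ℝ)
    (hdiff : ∀ x ∈ D, HasFDerivAt F
      (LinearMap.toContinuousLinearMap (Matrix.toEuclideanLin (J x))) x)
    (hrank : ∀ x ∈ Ω, (J x).rank = m)
    (γ p : ℝ) (hγ : 0 ≤ γ) (hp1 : 0 < p) (hp2 : p ≤ 1)
    (hHolder : ∀ x ∈ Ω, ∀ y ∈ Ω, specNorm (J y - J x) ≤ γ * ‖y - x‖ ^ p)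
    (μ : ℝ) (hμ : 0 < μ)
    (hpinv : ∀ x ∈ Ω, specNorm (pinvRow (J x)) ≤ μ)
    (η : ℝ) (hη : 0 < η) :
    ∃ β > (0:ℝ),
      γ * μ ^ (1 + p) * β ^ p / (1 + p) < 1 ∧
      μ * β / (1 - γ * μ ^ (1 + p) * β ^ p / (1 + p)) < η ∧
      ∀ x₀ ∈ Ω, (∀ y, ‖y - x₀‖ < η → y ∈ Ω) → ‖F x₀‖ < β →
        ∃ xs : ℕ → EuclideanSpace ℝ (Fin n),
          xs 0 = x₀ ∧
          (∀ k, xs (k + 1) = xs k - (WithLp.equiv 2 (Fin n → ℝ)).symm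
            ((pinvRow (J (xs k))).mulVec (WithLp.equiv 2 (Fin m → ℝ) (F (xs k))))) ∧
          (∀ k, xs k ∈ Ω) ∧
          ∃ xstar ∈ Ω, F xstar = 0 ∧
            Filter.Tendsto xs Filter.atTop (nhds xstar) := by
  have hmp : (0:ℝ) < μ ^ (1 + p) := Real.rpow_pos_of_pos hμ _
  set c : ℝ := 2 * (γ + 1) * μ ^ (1 + p) with hc
  have hcpos : 0 < c := by positivity
  set β : ℝ := min (η / (4 * μ)) (c⁻¹ ^ (1 / p)) with hβ
  have hβpos : 0 < β := lt_min (by positivity) (Real.rpow_pos_of_pos (by positivity) _)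
  have hβ1 : β ≤ η / (4 * μ) := min_le_left _ _
  have hβp : β ^ p ≤ c⁻¹ := by
    calc β ^ p ≤ (c⁻¹ ^ (1 / p)) ^ p :=
          Real.rpow_le_rpow hβpos.le (min_le_right _ _) hp1.le
      _ = c⁻¹ ^ ((1 / p) * p) := (Real.rpow_mul (by positivity) _ _).symm
      _ = c⁻¹ := by rw [one_div_mul_cancel hp1.ne', Real.rpow_one]
  set t : ℝ := γ * μ ^ (1 + p) * β ^ p with ht
  have htnonneg : 0 ≤ t := by positivity
  have ht2 : t ≤ 1 / 2 := by
    have h1 : t ≤ γ * μ ^ (1 + p) * c⁻¹ := by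
      apply mul_le_mul_of_nonneg_left hβp (by positivity)
    have h2 : γ * μ ^ (1 + p) * c⁻¹ = γ / (2 * (γ + 1)) := by
      rw [hc]; field_simp
    rw [h2] at h1
    have h3 : γ / (2 * (γ + 1)) ≤ 1 / 2 := by
      rw [div_le_div_iff₀ (by positivity) (by norm_num)]
      nlinarith
    linarith
  have hτt : γ * μ ^ (1 + p) * β ^ p / (1 + p) ≤ t := by
    rw [← ht]
    exact div_le_self htnonneg (by linarith)
  have hτnonneg : 0 ≤ γ * μ ^ (1 + p) * β ^ p / (1 + p) := by positivity
  refine ⟨β, hβpos, by linarith, ?_, ?_⟩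
  · -- μ β / (1 - τ) < η
    have h1mτ : (1:ℝ) / 2 ≤ 1 - γ * μ ^ (1 + p) * β ^ p / (1 + p) := by linarith
    have hμβ : μ * β ≤ η / 4 := by
      calc μ * β ≤ μ * (η / (4 * μ)) := by gcongr
        _ = η / 4 := by field_simp
    calc μ * β / (1 - γ * μ ^ (1 + p) * β ^ p / (1 + p))
        ≤ μ * β / (1 / 2) := by
          apply div_le_div_of_nonneg_left (by positivity) (by norm_num) h1mτ
      _ = 2 * (μ * β) := by ring
      _ ≤ 2 * (η / 4) := by linarith
      _ < η := by linarith
  · intro x₀ hx₀Ω hball hFβ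
    have hμβ : μ * β ≤ η / 4 := by
      calc μ * β ≤ μ * (η / (4 * μ)) := by gcongr
        _ = η / 4 := by field_simp
    set b₀ := ‖F x₀‖ with hb₀
    have hb₀0 : 0 ≤ b₀ := norm_nonneg _
    have hb₀β : b₀ < β := hFβ
    set g : EuclideanSpace ℝ (Fin n) → EuclideanSpace ℝ (Fin n) :=
      fun x => x - (WithLp.equiv 2 (Fin n → ℝ)).symm
        ((pinvRow (J x)).mulVec (WithLp.equiv 2 (Fin m → ℝ) (F x))) with hg
    set xs : ℕ → EuclideanSpace ℝ (Fin n) := fun k => g^[k] x₀ with hxs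
    have hxs0 : xs 0 = x₀ := rfl
    have hxssucc : ∀ k, xs (k + 1) = g (xs k) := fun k => Function.iterate_succ_apply' g k x₀
    have hstep : ∀ x ∈ Ω, ‖g x - x‖ ≤ μ * ‖F x‖ := by
      intro x hx
      have h1 : g x - x = -((WithLp.equiv 2 (Fin n → ℝ)).symm
          ((pinvRow (J x)).mulVec (WithLp.equiv 2 (Fin m → ℝ) (F x)))) := by
        rw [hg]; exact sub_sub_cancel_left _ _
      rw [h1, norm_neg]
      exact le_trans (norm_mulVec_le _ _)
        (mul_le_mul_of_nonneg_right (hpinv x hx) (norm_nonneg _))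
    have hdec : ∀ x ∈ Ω, g x ∈ Ω → ‖F (g x)‖ ≤ γ * ‖g x - x‖ ^ p * ‖g x - x‖ := by
      intro x hx hgx
      have htay := taylor_bound Ω hΩconv F J (fun z hz => hdiff z (hΩD hz)) γ p hγ hp1
        hHolder x hx (g x) hgx
      have hΦ : (LinearMap.toContinuousLinearMap (Matrix.toEuclideanLin (J x))) (g x - x)
          = - F x := by
        have h1 : g x - x = -((WithLp.equiv 2 (Fin n → ℝ)).symm
            ((pinvRow (J x)).mulVec (WithLp.equiv 2 (Fin m → ℝ) (F x)))) := by
          rw [hg]; exact sub_sub_cancel_left _ _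
        rw [h1, map_neg, neg_inj]
        have h2 : ∀ v : EuclideanSpace ℝ (Fin n),
            (LinearMap.toContinuousLinearMap (Matrix.toEuclideanLin (J x))) v
            = (WithLp.equiv 2 (Fin m → ℝ)).symm ((J x) *ᵥ (WithLp.equiv 2 (Fin n → ℝ) v)) := by
          intro v; simp [Matrix.toEuclideanLin_apply]
        rw [h2]
        have h3 : WithLp.equiv 2 (Fin n → ℝ) ((WithLp.equiv 2 (Fin n → ℝ)).symm
            ((pinvRow (J x)).mulVec (WithLp.equiv 2 (Fin m → ℝ) (F x))))
            = (pinvRow (J x)).mulVec (WithLp.equiv 2 (Fin m → ℝ) (F x)) :=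
          (WithLp.equiv 2 (Fin n → ℝ)).apply_symm_apply _
        rw [h3, mulVec_mulVec, mul_pinv_eq_one (J x) (hrank x hx), one_mulVec]
        exact (WithLp.equiv 2 (Fin m → ℝ)).symm_apply_apply _
      calc ‖F (g x)‖ = ‖F (g x) - F x -
            (LinearMap.toContinuousLinearMap (Matrix.toEuclideanLin (J x))) (g x - x)‖ := by
            rw [hΦ]; congr 1; abel
        _ ≤ γ * ‖g x - x‖ ^ p * ‖g x - x‖ := htay
    have hkey : ∀ k, xs k ∈ Ω ∧ ‖F (xs k)‖ ≤ (1/2 : ℝ) ^ k * b₀ ∧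
        ‖xs k - x₀‖ ≤ 2 * μ * b₀ * (1 - (1/2 : ℝ) ^ k) := by
      intro k
      induction k with
      | zero => exact ⟨hx₀Ω, by simp [hxs0, hb₀], by simp [hxs0]⟩
      | succ k ih =>
        obtain ⟨h1, h2, h3⟩ := ih
        have hq : (0:ℝ) < (1/2 : ℝ) ^ k := by positivity
        have hq1 : ((1:ℝ)/2) ^ k ≤ 1 := pow_le_one₀ (by norm_num) (by norm_num)
        have hsk : ‖xs (k + 1) - xs k‖ ≤ μ * ((1/2 : ℝ) ^ k * b₀) := by
          rw [hxssucc k]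
          exact le_trans (hstep _ h1) (mul_le_mul_of_nonneg_left h2 hμ.le)
        have hdist : ‖xs (k + 1) - x₀‖ ≤ 2 * μ * b₀ * (1 - (1/2 : ℝ) ^ (k + 1)) := by
          calc ‖xs (k + 1) - x₀‖ ≤ ‖xs (k + 1) - xs k‖ + ‖xs k - x₀‖ :=
                norm_sub_le_norm_sub_add_norm_sub _ _ _
            _ ≤ μ * ((1/2 : ℝ) ^ k * b₀) + 2 * μ * b₀ * (1 - (1/2 : ℝ) ^ k) := add_le_add hsk h3
            _ = 2 * μ * b₀ * (1 - (1/2 : ℝ) ^ (k + 1)) := by rw [pow_succ]; ring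
        have hlt : 2 * μ * b₀ * (1 - (1/2 : ℝ) ^ (k + 1)) < η := by
          have hq' : (0:ℝ) < (1/2 : ℝ) ^ (k + 1) := by positivity
          have hq1' : ((1:ℝ)/2) ^ (k + 1) ≤ 1 := pow_le_one₀ (by norm_num) (by norm_num)
          have h5 : 2 * μ * b₀ * (1 - (1/2 : ℝ) ^ (k + 1)) ≤ 2 * μ * b₀ :=
            mul_le_of_le_one_right (by positivity) (by linarith)
          have h6 : 2 * μ * b₀ < 2 * μ * β :=
            mul_lt_mul_of_pos_left hb₀β (by positivity)
          linarith
        have hmem : xs (k + 1) ∈ Ω := hball _ (lt_of_le_of_lt hdist hlt)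
        have hdle : ‖xs (k + 1) - xs k‖ ≤ μ * β := by
          refine le_trans hsk ?_
          have h7 : (1/2 : ℝ) ^ k * b₀ ≤ β :=
            le_trans (mul_le_of_le_one_left hb₀0 hq1) hb₀β.le
          exact mul_le_mul_of_nonneg_left h7 hμ.le
        have hFnew : ‖F (xs (k + 1))‖ ≤ (1/2 : ℝ) ^ (k + 1) * b₀ := by
          have hd := hdec (xs k) h1 (by rw [← hxssucc k]; exact hmem)
          rw [← hxssucc k] at hd
          have hb1 : ‖xs (k + 1) - xs k‖ ^ p ≤ (μ * β) ^ p :=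
            Real.rpow_le_rpow (norm_nonneg _) hdle hp1.le
          have hb2 : γ * ‖xs (k + 1) - xs k‖ ^ p * ‖xs (k + 1) - xs k‖
              ≤ γ * (μ * β) ^ p * (μ * ((1/2 : ℝ) ^ k * b₀)) := by
            have hA : 0 ≤ γ * ‖xs (k + 1) - xs k‖ ^ p := by positivity
            have : γ * ‖xs (k + 1) - xs k‖ ^ p ≤ γ * (μ * β) ^ p :=
              mul_le_mul_of_nonneg_left hb1 hγ
            exact mul_le_mul this hsk (norm_nonneg _) (by positivity)
          have hb3 : γ * (μ * β) ^ p * (μ * ((1/2 : ℝ) ^ k * b₀))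
              = t * ((1/2 : ℝ) ^ k * b₀) := by
            rw [ht, Real.mul_rpow hμ.le hβpos.le]
            rw [show μ ^ (1 + p) = μ * μ ^ p by
              rw [Real.rpow_add hμ, Real.rpow_one]]
            ring
          have hb4 : t * ((1/2 : ℝ) ^ k * b₀) ≤ (1/2 : ℝ) ^ (k + 1) * b₀ := by
            calc t * ((1/2 : ℝ) ^ k * b₀) ≤ (1/2) * ((1/2 : ℝ) ^ k * b₀) :=
                  mul_le_mul_of_nonneg_right ht2 (by positivity)
              _ = (1/2 : ℝ) ^ (k + 1) * b₀ := by rw [pow_succ]; ring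
          linarith
        exact ⟨hmem, hFnew, hdist⟩
    have hmemall : ∀ k, xs k ∈ Ω := fun k => (hkey k).1
    have hstepgeo : ∀ k, ‖xs (k + 1) - xs k‖ ≤ μ * b₀ * (1/2 : ℝ) ^ k := by
      intro k
      rw [hxssucc k]
      calc ‖g (xs k) - xs k‖ ≤ μ * ‖F (xs k)‖ := hstep _ (hmemall k)
        _ ≤ μ * ((1/2 : ℝ) ^ k * b₀) := mul_le_mul_of_nonneg_left (hkey k).2.1 hμ.le
        _ = μ * b₀ * (1/2 : ℝ) ^ k := by ring
    have hcauchy : CauchySeq xs := by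
      apply cauchySeq_of_le_geometric (1/2 : ℝ) (μ * b₀) (by norm_num)
      intro k
      rw [dist_eq_norm, norm_sub_rev]
      exact hstepgeo k
    obtain ⟨xst, hxst⟩ := cauchySeq_tendsto_of_complete hcauchy
    have h2μb : 2 * μ * b₀ < η := by
      have h6 : 2 * μ * b₀ < 2 * μ * β := mul_lt_mul_of_pos_left hb₀β (by positivity)
      linarith
    have hdistlim : ‖xst - x₀‖ < η := by
      have hle : ∀ k, ‖xs k - x₀‖ ≤ 2 * μ * b₀ := by
        intro k
        have hq : (0:ℝ) < (1/2 : ℝ) ^ k := by positivity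
        refine le_trans (hkey k).2.2 ?_
        exact mul_le_of_le_one_right (by positivity) (by
          have hq1 : ((1:ℝ)/2) ^ k ≤ 1 := pow_le_one₀ (by norm_num) (by norm_num)
          linarith)
      have htend : Filter.Tendsto (fun k => ‖xs k - x₀‖) Filter.atTop (nhds ‖xst - x₀‖) :=
        ((hxst.sub_const x₀).norm)
      have h1 : ‖xst - x₀‖ ≤ 2 * μ * b₀ :=
        le_of_tendsto htend (Filter.Eventually.of_forall hle)
      linarith
    have hxstΩ : xst ∈ Ω := hball xst hdistlim
    have hcont : ContinuousAt F xst := (hdiff xst (hΩD hxstΩ)).continuousAt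
    have hFlim : Filter.Tendsto (fun k => F (xs k)) Filter.atTop (nhds (F xst)) :=
      hcont.tendsto.comp hxst
    have hF0 : Filter.Tendsto (fun k => F (xs k)) Filter.atTop (nhds 0) := by
      apply squeeze_zero_norm (fun k => (hkey k).2.1)
      have h1 : Filter.Tendsto (fun k : ℕ => (1/2 : ℝ) ^ k) Filter.atTop (nhds 0) :=
        tendsto_pow_atTop_nhds_zero_of_lt_one (by norm_num) (by norm_num)
      have h2 := h1.mul_const b₀
      rw [zero_mul] at h2
      exact h2
    have hFxst : F xst = 0 := tendsto_nhds_unique hFlim hF0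
    exact ⟨xs, hxs0, fun k => hxssucc k, hmemall, xst, hxstΩ, hFxst, hxst⟩
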